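/- arXiv:2509.16902 — 2 statements merged into one kernel-verified Lean document; each statement's English description precedes it below -/
import Mathlib

section
/- For any vectors x, y, z in ℝ^d, if there exists Q > 0 such that |min_k (x ⊙ z)_k| ≤ Q (where ⊙ is the element-wise product), then ⟨x, y ⊙ z⟩ ≤ (max_k y_k)·⟨x, z⟩ + Q·(d·max_k y_k − Σ_{k=1}^d y_k). -/
/-- Lemma 1: For vectors `x, y, z ∈ ℝ^d`, if `|min_k (x ⊙ z)_k| ≤ Q` with `Q > 0`, then
`⟨x, y ⊙ z⟩ ≤ (max_k y_k) ⟨x, z⟩ + Q (d max_k y_k − Σ_k y_k)`. -/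
theorem stmt_0 (d : ℕ) [NeZero d] (x y z : Fin d → ℝ) (Q : ℝ) (hQ : 0 < Q)
    (hmin : |Finset.univ.inf' Finset.univ_nonempty (fun k => x k * z k)| ≤ Q) :
    ∑ k, x k * (y k * z k) ≤
      (Finset.univ.sup' Finset.univ_nonempty y) * ∑ k, x k * z k +
        Q * (d * Finset.univ.sup' Finset.univ_nonempty y - ∑ k, y k) := by
  set M := Finset.univ.sup' Finset.univ_nonempty y with hM
  set m := Finset.univ.inf' Finset.univ_nonempty (fun k => x k * z k) with hm
  have hMk : ∀ k : Fin d, y k ≤ M := fun k => Finset.le_sup' y (Finset.mem_univ k)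
  have hmk : ∀ k : Fin d, m ≤ x k * z k := fun k =>
    Finset.inf'_le (fun k => x k * z k) (Finset.mem_univ k)
  have key : ∀ k : Fin d, (M - y k) * m ≤ (M - y k) * (x k * z k) := fun k =>
    mul_le_mul_of_nonneg_left (hmk k) (sub_nonneg.mpr (hMk k))
  have hsum : ∑ k, (M - y k) * m ≤ ∑ k, (M - y k) * (x k * z k) :=
    Finset.sum_le_sum (fun k _ => key k)
  have e1 : ∑ k, (M - y k) * m = (d * M - ∑ k, y k) * m := by
    rw [← Finset.sum_mul, Finset.sum_sub_distrib, Finset.sum_const, Finset.card_univ,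
      Fintype.card_fin, nsmul_eq_mul]
  have e2 : ∑ k : Fin d, (M - y k) * (x k * z k)
      = M * (∑ k, x k * z k) - ∑ k, x k * (y k * z k) := by
    rw [Finset.mul_sum, ← Finset.sum_sub_distrib]
    exact Finset.sum_congr rfl (fun k _ => by ring)
  have hdM : (0:ℝ) ≤ d * M - ∑ k, y k := by
    have : ∑ k, y k ≤ ∑ k : Fin d, M := Finset.sum_le_sum (fun k _ => hMk k)
    simp only [Finset.sum_const, Finset.card_univ, Fintype.card_fin, nsmul_eq_mul] at this
    linarith
  have hmQ : -Q ≤ m := neg_le_of_abs_le hmin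
  nlinarith [hsum, e1, e2, mul_le_mul_of_nonneg_right hmQ hdM]
end

section
/- For diagonal matrices X, Y, Z in ℝ^{d×d} formed from vectors x, y, z, the trace of their product satisfies Tr(XYZ) ≤ λ₁(Y)·Tr(XZ) − λ_d(XZ)·(d·λ₁(Y) − Tr(Y)), where λ₁(Y) = max_k y_k is the largest eigenvalue of Y and λ_d(XZ) = min_k (x_k z_k) is the smallest eigenvalue of XZ. -/
/-- For diagonal matrices `X = diag x`, `Y = diag y`, `Z = diag z`,
`Tr(XYZ) ≤ λ₁(Y)·Tr(XZ) − λ_d(XZ)·(d·λ₁(Y) − Tr(Y))`, where `λ₁(Y) = max_k y_k` and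
`λ_d(XZ) = min_k x_k z_k`. -/
theorem stmt_1 (d : ℕ) [NeZero d] (x y z : Fin d → ℝ) :
    Matrix.trace (Matrix.diagonal x * Matrix.diagonal y * Matrix.diagonal z) ≤
      (Finset.univ.sup' Finset.univ_nonempty y) *
          Matrix.trace (Matrix.diagonal x * Matrix.diagonal z) -
        (Finset.univ.inf' Finset.univ_nonempty (fun k => x k * z k)) *
          (d * Finset.univ.sup' Finset.univ_nonempty y -
            Matrix.trace (Matrix.diagonal y)) := by
  set M := Finset.univ.sup' Finset.univ_nonempty y with hM
  set m := Finset.univ.inf' Finset.univ_nonempty (fun k => x k * z k) with hm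
  simp only [Matrix.diagonal_mul_diagonal, Matrix.trace_diagonal]
  have hd : (d : ℝ) = ∑ k : Fin d, (1 : ℝ) := by simp
  rw [hd, Finset.mul_sum, Finset.sum_mul, ← Finset.sum_sub_distrib, Finset.mul_sum,
    ← Finset.sum_sub_distrib]
  apply Finset.sum_le_sum
  intro k _
  have h1 : y k ≤ M := Finset.le_sup' y (Finset.mem_univ k)
  have h2 : m ≤ x k * z k := Finset.inf'_le _ (Finset.mem_univ k)
  nlinarith [mul_le_mul_of_nonneg_left h2 (sub_nonneg.2 h1)]
end
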